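/- arXiv:1409.1255 — 5 statements merged into one kernel-verified Lean document; each statement's English description precedes it below -/
import Mathlib

section
/- Let n ≥ 1 and M ∈ M_{n×n}(ℂ). Then the operator norm of the matrix exponential e^{-tM} (acting on the Euclidean space ℂⁿ) satisfies ‖e^{-tM}‖ ≤ 1 for all real t ≥ 0 if and only if Re⟨Mz, z⟩ ≥ 0 for every z ∈ ℂⁿ. -/
open NormedSpace Matrix
open scoped Matrix.Norms.L2Operator

set_option synthInstance.maxHeartbeats 1000000
set_option maxHeartbeats 1000000

/-- For `n ≥ 1` and `M` an `n × n` complex matrix, the operator norm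
(induced by the Euclidean norm on `ℂⁿ`) of `e^{-tM}` is `≤ 1` for all `t ≥ 0`
if and only if `Re⟨Mz, z⟩ ≥ 0` for every `z ∈ ℂⁿ`. -/
theorem stmt0 (n : ℕ) (hn : 1 ≤ n) (M : Matrix (Fin n) (Fin n) ℂ) :
    (∀ t : ℝ, 0 ≤ t →
        ‖Matrix.toEuclideanCLM (𝕜 := ℂ) (exp (-(t : ℂ) • M))‖ ≤ 1) ↔
    ∀ z : EuclideanSpace ℂ (Fin n),
        0 ≤ (inner ℂ (Matrix.toEuclideanLin M z) z : ℂ).re := by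
  set A : EuclideanSpace ℂ (Fin n) →L[ℂ] EuclideanSpace ℂ (Fin n) :=
    Matrix.toEuclideanCLM (𝕜 := ℂ) M with hA
  -- toEuclideanCLM commutes with exp
  have hc : Continuous (fun X : Matrix (Fin n) (Fin n) ℂ => Matrix.toEuclideanCLM (𝕜 := ℂ) X) :=
    LinearMap.continuous_of_finiteDimensional
      { toFun := fun X => Matrix.toEuclideanCLM (𝕜 := ℂ) X,
        map_add' := fun a b => map_add _ a b,
        map_smul' := fun c a => _root_.map_smul _ c a }
  have hkey : ∀ t : ℝ, Matrix.toEuclideanCLM (𝕜 := ℂ) (exp (-(t : ℂ) • M)) =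
      exp (-(t : ℂ) • A) := by
    intro t
    letI : NormedAlgebra ℚ (Matrix (Fin n) (Fin n) ℂ) := NormedAlgebra.restrictScalars ℚ ℂ _
    haveI : CompleteSpace (Matrix (Fin n) (Fin n) ℂ) := FiniteDimensional.complete ℂ _
    rw [show Matrix.toEuclideanCLM (𝕜 := ℂ) (exp (-(t : ℂ) • M)) =
        exp (Matrix.toEuclideanCLM (𝕜 := ℂ) (-(t : ℂ) • M)) from
      map_exp (Matrix.toEuclideanCLM (𝕜 := ℂ) (n := Fin n)) hc _, _root_.map_smul]
  have hinner : ∀ z : EuclideanSpace ℂ (Fin n),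
      (inner ℂ (Matrix.toEuclideanLin M z) z : ℂ) = inner ℂ (A z) z := fun z => rfl
  -- derivative of the exponential
  have hexp : ∀ t : ℝ, HasDerivAt (fun s : ℝ => exp (-(s : ℂ) • A))
      ((-A) * exp (-(t : ℂ) • A)) t := by
    intro t
    have h := hasDerivAt_exp_smul_const' (𝕂 := ℝ) (x := -A) t
    have he : ∀ s : ℝ, (s : ℝ) • (-A) = -(s : ℂ) • A := by
      intro s
      ext x
      simp [← Complex.coe_smul]
    simp only [he] at h
    exact h
  -- derivative of t ↦ exp(-tA) z
  have hu : ∀ (z : EuclideanSpace ℂ (Fin n)) (t : ℝ),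
      HasDerivAt (fun s : ℝ => exp (-(s : ℂ) • A) z)
        (-(A (exp (-(t : ℂ) • A) z))) t := by
    intro z t
    have hB := ((ContinuousLinearMap.apply ℂ (EuclideanSpace ℂ (Fin n))
        z).restrictScalars ℝ).hasFDerivAt.comp_hasDerivAt t (hexp t)
    exact hB
  -- derivative of t ↦ ‖exp(-tA) z‖²
  have hg : ∀ (z : EuclideanSpace ℂ (Fin n)) (t : ℝ),
      HasDerivAt (fun s : ℝ => ‖exp (-(s : ℂ) • A) z‖ ^ 2)
        (-(2 * (inner ℂ (A (exp (-(t : ℂ) • A) z)) (exp (-(t : ℂ) • A) z) : ℂ).re)) t := by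
    intro z t
    have h1 := HasDerivAt.inner ℂ (hu z t) (hu z t)
    have h2 := (Complex.reCLM.hasFDerivAt.comp_hasDerivAt t h1)
    have h3 : (fun s : ℝ => Complex.reCLM ((inner ℂ (exp (-(s : ℂ) • A) z)
        (exp (-(s : ℂ) • A) z) : ℂ))) = fun s : ℝ => ‖exp (-(s : ℂ) • A) z‖ ^ 2 := by
      funext s
      rw [Complex.reCLM_apply]
      exact inner_self_eq_norm_sq (𝕜 := ℂ) _
    simp only [Function.comp_def] at h2
    rw [h3] at h2
    refine h2.congr_deriv ?_
    set w := exp (-(t : ℂ) • A) z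
    simp only [inner_neg_left, inner_neg_right, Complex.reCLM_apply, map_add, map_neg]
    have : (inner ℂ w (A w) : ℂ).re = (inner ℂ (A w) w : ℂ).re := inner_re_symm (𝕜 := ℂ) w (A w)
    rw [this]
    ring
  have hu0 : ∀ z : EuclideanSpace ℂ (Fin n), exp (-((0 : ℝ) : ℂ) • A) z = z := by
    intro z
    rw [show -((0 : ℝ) : ℂ) • A = 0 by module, exp_zero]
    rfl
  constructor
  · -- contraction ⇒ dissipative
    intro H z
    rw [hinner]
    have hd := hg z 0
    rw [hu0 z] at hd
    -- slope on the right of 0 is ≤ 0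
    have hslope : ∀ t : ℝ, 0 < t →
        ‖exp (-(t : ℂ) • A) z‖ ^ 2 ≤ ‖exp (-((0 : ℝ) : ℂ) • A) z‖ ^ 2 := by
      intro t ht
      rw [hu0 z]
      have h1 := H t ht.le
      rw [hkey t] at h1
      have h2 : ‖exp (-(t : ℂ) • A) z‖ ≤ 1 * ‖z‖ :=
        le_trans ((exp (-(t : ℂ) • A)).le_opNorm z)
          (mul_le_mul_of_nonneg_right h1 (norm_nonneg z))
      rw [one_mul] at h2
      exact pow_le_pow_left₀ (norm_nonneg _) h2 2
    have hdW := (hd.hasDerivWithinAt (s := Set.Ioi (0:ℝ)))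
    rw [hasDerivWithinAt_iff_tendsto_slope] at hdW
    have hIoi : Set.Ioi (0:ℝ) \ {0} = Set.Ioi 0 := by
      apply Set.diff_singleton_eq_self
      simp
    rw [hIoi] at hdW
    have hle : -(2 * (inner ℂ (A z) z : ℂ).re) ≤ 0 := by
      refine le_of_tendsto hdW ?_
      filter_upwards [self_mem_nhdsWithin] with t ht
      have ht' : (0:ℝ) < t := ht
      rw [slope_def_field]
      apply div_nonpos_of_nonpos_of_nonneg
      · have := hslope t ht'
        linarith
      · linarith
    linarith
  · -- dissipative ⇒ contraction
    intro h t ht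
    rw [hkey t]
    refine ContinuousLinearMap.opNorm_le_bound _ zero_le_one (fun z => ?_)
    rw [one_mul]
    have hmono : Antitone (fun s : ℝ => ‖exp (-(s : ℂ) • A) z‖ ^ 2) := by
      apply antitone_of_deriv_nonpos
      · exact fun s => (hg z s).differentiableAt
      · intro s
        rw [(hg z s).deriv]
        have := h (exp (-(s : ℂ) • A) z)
        rw [hinner] at this
        linarith
    have := hmono ht
    simp only at this
    rw [hu0 z] at this
    have h2 : ‖exp (-(t : ℂ) • A) z‖ ^ 2 ≤ ‖z‖ ^ 2 := this
    exact (pow_le_pow_iff_left₀ (norm_nonneg _) (norm_nonneg _) two_ne_zero).mp h2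
end

section
/- Let n ≥ 1 and let J ∈ M_{n×n}(ℂ) be in Jordan normal form: J_{jj} = λ_j for j = 1,…,n, the superdiagonal entries satisfy J_{j-1,j} = γ_j ∈ {0,1} for j = 2,…,n, all other entries of J vanish, and whenever γ_j = 1 one has λ_{j-1} = λ_j. Let D_J be the operator on ℂ[z_1,…,z_n] given by D_J p = Σ_{j,k} J_{jk} z_k ∂_{z_j} p. Then for every multi-index α ∈ ℕⁿ, setting λ_α = Σ_{j=1}^n λ_j α_j, one has (D_J − λ_α·Id)^{(n−1)|α|+1} (z^α) = 0, where z^α = z_1^{α_1}⋯z_n^{α_n} and |α| = α_1+⋯+α_n. -/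
open MvPolynomial
open scoped BigOperators

/-- The operator `D_F p = Σ_{j,k} F_{jk} z_k ∂_{z_j} p` on `ℂ[z_1,…,z_n]`,
as a linear endomorphism. -/
noncomputable def DOp {n : ℕ} (F : Matrix (Fin n) (Fin n) ℂ) :
    Module.End ℂ (MvPolynomial (Fin n) ℂ) :=
  ∑ j : Fin n, ∑ k : Fin n,
    F j k • (LinearMap.mulLeft ℂ (X k : MvPolynomial (Fin n) ℂ)).comp
      (pderiv j).toLinearMap

lemma dop_monomial {n : ℕ} (J : Matrix (Fin n) (Fin n) ℂ) (β : Fin n →₀ ℕ) :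
    DOp J (monomial β 1) = ∑ j : Fin n, ∑ k : Fin n,
      (J j k * (β j : ℂ)) • monomial (β - Finsupp.single j 1 + Finsupp.single k 1) (1:ℂ) := by
  simp only [DOp, LinearMap.sum_apply, LinearMap.smul_apply, LinearMap.comp_apply,
    LinearMap.mulLeft_apply, Derivation.coeFn_coe, pderiv_monomial, one_mul]
  refine Finset.sum_congr rfl fun j _ => Finset.sum_congr rfl fun k _ => ?_
  rw [X, monomial_mul, one_mul, add_comm (Finsupp.single k 1), smul_monomial]
  simp [smul_monomial]

lemma sum_mul_single_nat {n : ℕ} (g : Fin n → ℕ) (j : Fin n) :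
    ∑ i, g i * (Finsupp.single j 1 : Fin n →₀ ℕ) i = g j := by
  simp [Finsupp.single_apply, Finset.sum_ite_eq, mul_ite]

lemma sum_mul_single_c {n : ℕ} (g : Fin n → ℂ) (j : Fin n) :
    ∑ i, g i * (((Finsupp.single j 1 : Fin n →₀ ℕ) i : ℂ)) = g j := by
  simp [Finsupp.single_apply, Finset.sum_ite_eq, mul_ite, apply_ite (Nat.cast : ℕ → ℂ)]

lemma sum_add_nat {n : ℕ} (g : Fin n → ℕ) (δ : Fin n →₀ ℕ) (j : Fin n) :
    ∑ i, g i * ((δ + Finsupp.single j 1 : Fin n →₀ ℕ) i) = (∑ i, g i * δ i) + g j := by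
  simp only [Finsupp.add_apply, Nat.mul_add, Finset.sum_add_distrib, sum_mul_single_nat]

lemma sum_apply_add {n : ℕ} (δ : Fin n →₀ ℕ) (j : Fin n) :
    ∑ i, ((δ + Finsupp.single j 1 : Fin n →₀ ℕ) i) = (∑ i, δ i) + 1 := by
  have := sum_add_nat (fun _ => 1) δ j
  simpa using this

lemma sum_add_c {n : ℕ} (g : Fin n → ℂ) (δ : Fin n →₀ ℕ) (j : Fin n) :
    ∑ i, g i * ((((δ + Finsupp.single j 1 : Fin n →₀ ℕ) i) : ℕ) : ℂ) = (∑ i, g i * (δ i : ℂ)) + g j := by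
  simp only [Finsupp.add_apply, Nat.cast_add, mul_add, Finset.sum_add_distrib, sum_mul_single_c]

/-- if `J` is in Jordan normal form with diagonal `λ_j` and
superdiagonal entries `γ_j ∈ {0,1}` (with `λ_{j-1} = λ_j` whenever `γ_j = 1`), then
for every multi-index `α`, `(D_J - λ_α)^{(n-1)|α|+1} (z^α) = 0` where
`λ_α = Σ_j λ_j α_j`. -/
theorem stmt13 (n : ℕ) (hn : 1 ≤ n) (J : Matrix (Fin n) (Fin n) ℂ)
    (lam γ : Fin n → ℂ)
    (hdiag : ∀ j : Fin n, J j j = lam j)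
    (hsup : ∀ j : Fin n, 0 < j.val →
        J ⟨j.val - 1, Nat.lt_of_le_of_lt (Nat.sub_le _ _) j.isLt⟩ j = γ j)
    (hγ : ∀ j : Fin n, γ j = 0 ∨ γ j = 1)
    (hother : ∀ i j : Fin n, i ≠ j → i.val + 1 ≠ j.val → J i j = 0)
    (hchain : ∀ j : Fin n, ∀ hj : 0 < j.val, γ j = 1 →
        lam ⟨j.val - 1, Nat.lt_of_le_of_lt (Nat.sub_le _ _) j.isLt⟩ = lam j)
    (α : Fin n → ℕ) :
    ((DOp J - (∑ j, lam j * (α j : ℂ)) •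
        (1 : Module.End ℂ (MvPolynomial (Fin n) ℂ)))
      ^ ((n - 1) * (∑ j, α j) + 1))
      (∏ j, (X j : MvPolynomial (Fin n) ℂ) ^ α j) = 0 := by
  set A : ℕ := ∑ j, α j with hA
  set Λ : ℂ := ∑ j, lam j * (α j : ℂ) with hΛ
  set T : Module.End ℂ (MvPolynomial (Fin n) ℂ) := DOp J - Λ • 1 with hT
  set S : ℕ → Set (MvPolynomial (Fin n) ℂ) := fun m =>
    {q | ∃ β : Fin n →₀ ℕ, (∑ i, β i) = A ∧ (∑ i, lam i * (β i : ℂ)) = Λ ∧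
      m ≤ ∑ i, i.val * β i ∧ q = monomial β 1} with hS
  -- the step lemma
  have step : ∀ m : ℕ, ∀ q ∈ S m, T q ∈ Submodule.span ℂ (S (m + 1)) := by
    intro m q hq
    obtain ⟨β, h1, h2, h3, rfl⟩ := hq
    have hTq : T (monomial β 1) = DOp J (monomial β 1) - Λ • monomial β 1 := by
      simp [hT, LinearMap.sub_apply]
    rw [hTq, dop_monomial]
    -- split off diagonal
    have hsplit : ∀ j : Fin n, (∑ k : Fin n,
        (J j k * (β j : ℂ)) • monomial (β - Finsupp.single j 1 + Finsupp.single k 1) (1:ℂ))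
        = (J j j * (β j : ℂ)) • monomial (β - Finsupp.single j 1 + Finsupp.single j 1) (1:ℂ)
          + ∑ k ∈ Finset.univ.erase j,
            (J j k * (β j : ℂ)) • monomial (β - Finsupp.single j 1 + Finsupp.single k 1) (1:ℂ) := by
      intro j
      exact (Finset.add_sum_erase Finset.univ _ (Finset.mem_univ j)).symm
    rw [Finset.sum_congr rfl fun j _ => hsplit j, Finset.sum_add_distrib]
    -- diagonal part equals Λ • monomial β 1
    have hdiagsum : (∑ j : Fin n,
        (J j j * (β j : ℂ)) • monomial (β - Finsupp.single j 1 + Finsupp.single j 1) (1:ℂ))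
        = Λ • monomial β 1 := by
      rw [← h2, Finset.sum_smul]
      refine Finset.sum_congr rfl fun j _ => ?_
      rcases Nat.eq_zero_or_pos (β j) with h0 | hpos
      · simp [h0]
      · have hle : Finsupp.single j 1 ≤ β := by
          rw [Finsupp.single_le_iff]; exact hpos
        rw [tsub_add_cancel_of_le hle, hdiag j]
    rw [hdiagsum, add_sub_cancel_left]
    -- the off-diagonal part lies in the span
    refine Submodule.sum_mem _ fun j _ => Submodule.sum_mem _ fun k hk => ?_
    have hkj : k ≠ j := Finset.ne_of_mem_erase hk
    by_cases hadj : j.val + 1 = k.val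
    · -- k is the superdiagonal neighbour
      rcases Nat.eq_zero_or_pos (β j) with h0 | hpos
      · simp [h0]
      · have hkpos : 0 < k.val := by omega
        have hjk : (⟨k.val - 1, Nat.lt_of_le_of_lt (Nat.sub_le _ _) k.isLt⟩ : Fin n) = j := by
          apply Fin.ext; simp; omega
        have hJjk : J j k = γ k := by rw [← hjk]; exact hsup k hkpos
        rcases hγ k with hγ0 | hγ1
        · simp [hJjk, hγ0]
        · have hlamjk : lam j = lam k := by
            rw [← hjk]; exact hchain k hkpos hγ1
          rw [hJjk, hγ1, one_mul]
          refine Submodule.smul_mem _ _ (Submodule.subset_span ?_)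
          have hle : Finsupp.single j 1 ≤ β := by
            rw [Finsupp.single_le_iff]; exact hpos
          set δ : Fin n →₀ ℕ := β - Finsupp.single j 1 with hδ
          have hβδ : β = δ + Finsupp.single j 1 := (tsub_add_cancel_of_le hle).symm
          refine ⟨δ + Finsupp.single k 1, ?_, ?_, ?_, rfl⟩
          · rw [← h1, hβδ, sum_apply_add, sum_apply_add]
          · rw [← h2, hβδ, sum_add_c, sum_add_c, hlamjk]
          · have hw : (∑ i, i.val * β i) + 1 = ∑ i, i.val * ((δ + Finsupp.single k 1 : Fin n →₀ ℕ) i) := by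
              rw [hβδ, sum_add_nat (fun i : Fin n => i.val), sum_add_nat (fun i : Fin n => i.val)]
              omega
            omega
    · -- far entry: J j k = 0
      have : J j k = 0 := hother j k (Ne.symm hkj) hadj
      simp [this]
  -- iterate the step lemma
  have stepspan : ∀ m : ℕ, ∀ p ∈ Submodule.span ℂ (S m),
      T p ∈ Submodule.span ℂ (S (m + 1)) := by
    intro m p hp
    induction hp using Submodule.span_induction with
    | mem x hx => exact step m x hx
    | zero => simp
    | add x y _ _ hx hy => rw [map_add]; exact Submodule.add_mem _ hx hy
    | smul c x _ hx => rw [map_smul]; exact Submodule.smul_mem _ _ hx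
  set Φ : Fin n →₀ ℕ := Finsupp.equivFunOnFinite.symm α with hΦ
  have hΦa : ∀ i, Φ i = α i := fun i => rfl
  set w₀ : ℕ := ∑ i : Fin n, i.val * α i with hw₀
  have iter : ∀ m : ℕ, (T ^ m) (monomial Φ 1) ∈ Submodule.span ℂ (S (w₀ + m)) := by
    intro m
    induction m with
    | zero =>
      refine Submodule.subset_span ⟨Φ, rfl, rfl, ?_, by simp⟩
      exact Nat.le_of_eq (Nat.add_zero _)
    | succ m ih =>
      rw [pow_succ', Module.End.mul_apply]
      exact stepspan (w₀ + m) _ ih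
  -- conclude
  have hprod : (∏ j, (X j : MvPolynomial (Fin n) ℂ) ^ α j) = monomial Φ 1 := by
    have h1 : ∏ x ∈ Φ.support, (X x : MvPolynomial (Fin n) ℂ) ^ Φ x = monomial Φ 1 :=
      prod_X_pow_eq_monomial
    rw [← h1]
    exact (Finset.prod_subset (Finset.subset_univ _) fun x _ hx => by
      have h0 : α x = 0 := Finsupp.notMem_support_iff.mp hx
      simp [h0]).symm
  rw [hprod]
  have hmem := iter ((n - 1) * A + 1)
  have hempty : S (w₀ + ((n - 1) * A + 1)) = ∅ := by
    rw [Set.eq_empty_iff_forall_notMem]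
    rintro q ⟨β, h1, h2, h3, rfl⟩
    have hbound : (∑ i, i.val * β i) ≤ (n - 1) * A := by
      rw [← h1, Finset.mul_sum]
      refine Finset.sum_le_sum fun i _ => ?_
      have : i.val ≤ n - 1 := by omega
      exact Nat.mul_le_mul_right _ this
    omega
  rw [hempty, Submodule.span_empty, Submodule.mem_bot] at hmem
  exact hmem
end

section
/- Let n ≥ 1, M ∈ M_{n×n}(ℂ), and let G ∈ M_{n×n}(ℂ) be invertible such that J = G M G⁻¹ is in Jordan normal form with diagonal entries λ_1,…,λ_n, superdiagonal entries in {0,1}, all other entries zero, and equal consecutive diagonal entries wherever a superdiagonal entry equals 1. For α ∈ ℕⁿ define the polynomial p_α(z) = Π_{j=1}^n (Σ_{k=1}^n G_{jk} z_k)^{α_j} (i.e., p_α(z) = (Gz)^α) and λ_α = Σ_{j=1}^n λ_j α_j. Then p_α is a generalized eigenvector of the operator D_M p = Σ_{j,k} m_{jk} z_k ∂_{z_j} p with eigenvalue λ_α: (D_M − λ_α·Id)^{(n−1)|α|+1} p_α = 0. -/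
open MvPolynomial
open scoped BigOperators

section helpers

variable {n : ℕ}

lemma sum_comp_update {Mo : Type*} [AddCommMonoid Mo] (F : Fin n → ℕ → Mo)
    (g : Fin n → ℕ) (i : Fin n) (v : ℕ) (s : Finset (Fin n)) (hi : i ∈ s) :
    ∑ k ∈ s, F k (Function.update g i v k) = F i v + ∑ k ∈ s.erase i, F k (g k) := by
  rw [← Finset.add_sum_erase s _ hi, Function.update_self]
  exact congrArg _ (Finset.sum_congr rfl fun k hk => by
    rw [Function.update_of_ne (Finset.ne_of_mem_erase hk)])

lemma prod_comp_update {Mo : Type*} [CommMonoid Mo] (F : Fin n → ℕ → Mo)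
    (g : Fin n → ℕ) (i : Fin n) (v : ℕ) (s : Finset (Fin n)) (hi : i ∈ s) :
    ∏ k ∈ s, F k (Function.update g i v k) = F i v * ∏ k ∈ s.erase i, F k (g k) := by
  rw [← Finset.mul_prod_erase s _ hi, Function.update_self]
  exact congrArg _ (Finset.prod_congr rfl fun k hk => by
    rw [Function.update_of_ne (Finset.ne_of_mem_erase hk)])

/-- shift one unit of the multi-index from position `j` to position `j'`. -/
def shift (β : Fin n → ℕ) (j j' : Fin n) : Fin n → ℕ :=
  Function.update (Function.update β j (β j - 1)) j' (β j' + 1)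

lemma sum_shift {Mo : Type*} [AddCommMonoid Mo] (F : Fin n → ℕ → Mo)
    (β : Fin n → ℕ) (j j' : Fin n) (hjj : j ≠ j') :
    ∑ k, F k (shift β j j' k) + (F j (β j) + F j' (β j'))
      = (∑ k, F k (β k)) + (F j (β j - 1) + F j' (β j' + 1)) := by
  have hj' : j ∈ Finset.univ.erase j' := Finset.mem_erase.2 ⟨hjj, Finset.mem_univ j⟩
  have h1 : ∑ k, F k (shift β j j' k)
      = F j' (β j' + 1) + (F j (β j - 1) + ∑ k ∈ (Finset.univ.erase j').erase j, F k (β k)) := by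
    rw [shift, sum_comp_update F _ j' _ _ (Finset.mem_univ j'),
      sum_comp_update F β j _ _ hj']
  have h2 : (∑ k, F k (β k))
      = F j' (β j') + (F j (β j) + ∑ k ∈ (Finset.univ.erase j').erase j, F k (β k)) := by
    rw [← Finset.add_sum_erase _ _ (Finset.mem_univ j'), ← Finset.add_sum_erase _ _ hj']
  rw [h1, h2]
  abel

end helpers

section core

variable {n : ℕ} (M : Matrix (Fin n) (Fin n) ℂ)

lemma DOp_apply (q : MvPolynomial (Fin n) ℂ) :
    DOp M q = ∑ j : Fin n, ∑ k : Fin n, C (M j k) * (X k * pderiv j q) := by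
  simp [DOp, smul_eq_C_mul, LinearMap.sum_apply]

lemma DOp_mul (p q : MvPolynomial (Fin n) ℂ) :
    DOp M (p * q) = p * DOp M q + q * DOp M p := by
  simp only [DOp_apply, pderiv_mul, Finset.mul_sum, ← Finset.sum_add_distrib]
  refine Finset.sum_congr rfl fun j _ => Finset.sum_congr rfl fun k _ => ?_
  ring

lemma DOp_one : DOp M (1 : MvPolynomial (Fin n) ℂ) = 0 := by
  simp [DOp_apply]

lemma DOp_pow (q : MvPolynomial (Fin n) ℂ) (m : ℕ) :
    DOp M (q ^ m) = (m : ℂ) • (q ^ (m - 1) * DOp M q) := by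
  induction m with
  | zero => simp [DOp_one]
  | succ m ih =>
    rw [pow_succ, DOp_mul, ih]
    cases m with
    | zero => simp
    | succ m =>
      simp only [Nat.add_sub_cancel, smul_mul_assoc, mul_smul_comm]
      rw [show q * (q ^ m * DOp M q) = q^(m+1) * DOp M q by ring]
      push_cast
      rw [add_smul, add_smul, one_smul]
      module

lemma DOp_prod {ι : Type*} [DecidableEq ι] (s : Finset ι) (f : ι → MvPolynomial (Fin n) ℂ) :
    DOp M (∏ i ∈ s, f i) = ∑ i ∈ s, DOp M (f i) * ∏ k ∈ s.erase i, f k := by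
  induction s using Finset.induction_on with
  | empty => simp [DOp_one]
  | insert a s ha ih =>
    rw [Finset.prod_insert ha, DOp_mul, ih, Finset.sum_insert ha, Finset.erase_insert ha]
    rw [Finset.mul_sum, add_comm]
    congr 1
    · rw [mul_comm]
    · refine Finset.sum_congr rfl fun i hi => ?_
      rw [Finset.erase_insert_of_ne (by rintro rfl; exact ha hi),
        Finset.prod_insert (fun h => ha (Finset.mem_of_mem_erase h))]
      ring

/-- the main computation: action of `DOp M` on a product of powers of the
linear forms `ℓ j`, given how `DOp M` acts on each `ℓ j`. -/
lemma DOp_p (lam γ : Fin n → ℂ) (ℓ : Fin n → MvPolynomial (Fin n) ℂ)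
    (hder : ∀ j : Fin n, DOp M (ℓ j) = C (lam j) * ℓ j +
      (if h : (j : ℕ) + 1 < n then C (γ ⟨(j : ℕ) + 1, h⟩) * ℓ ⟨(j : ℕ) + 1, h⟩ else 0))
    (β : Fin n → ℕ) :
    DOp M (∏ j, ℓ j ^ β j) = (∑ j, lam j * (β j : ℂ)) • (∏ j, ℓ j ^ β j)
      + ∑ j : Fin n, (if h : (j : ℕ) + 1 < n then
          ((β j : ℂ) * γ ⟨(j : ℕ) + 1, h⟩) • (∏ k, ℓ k ^ (shift β j ⟨(j : ℕ) + 1, h⟩ k))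
        else 0) := by
  rw [DOp_prod]
  have hterm : ∀ j : Fin n,
      DOp M (ℓ j ^ β j) * ∏ k ∈ Finset.univ.erase j, ℓ k ^ β k
        = (lam j * (β j : ℂ)) • (∏ k, ℓ k ^ β k)
          + (if h : (j : ℕ) + 1 < n then
              ((β j : ℂ) * γ ⟨(j : ℕ) + 1, h⟩) • (∏ k, ℓ k ^ (shift β j ⟨(j : ℕ) + 1, h⟩ k))
            else 0) := by
    intro j
    rw [DOp_pow, hder j]
    rcases Nat.eq_zero_or_pos (β j) with hb | hb
    · simp [hb]
    obtain ⟨c, hc⟩ : ∃ c, β j = c + 1 := ⟨β j - 1, by omega⟩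
    split_ifs with h
    · -- with successor on the superdiagonal
      set j' : Fin n := ⟨(j : ℕ) + 1, h⟩ with hj'def
      have hjj : j ≠ j' := by
        intro hh
        have := congrArg Fin.val hh
        simp [hj'def] at this
      have hj'mem : j' ∈ Finset.univ.erase j := Finset.mem_erase.2 ⟨Ne.symm hjj, Finset.mem_univ _⟩
      have hprodshift : (∏ k, ℓ k ^ (shift β j j' k))
          = ℓ j' ^ (β j' + 1) * (ℓ j ^ (β j - 1) *
              ∏ k ∈ (Finset.univ.erase j').erase j, ℓ k ^ β k) := by
        rw [shift, prod_comp_update (fun k v => ℓ k ^ v) _ j' _ _ (Finset.mem_univ j'),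
          prod_comp_update (fun k v => ℓ k ^ v) β j _ _
            (Finset.mem_erase.2 ⟨hjj, Finset.mem_univ j⟩)]
      have hprodfull : (∏ k, ℓ k ^ β k) = ℓ j ^ β j * ∏ k ∈ Finset.univ.erase j, ℓ k ^ β k :=
        (Finset.mul_prod_erase _ _ (Finset.mem_univ j)).symm
      have hprod2 : (∏ k ∈ Finset.univ.erase j, ℓ k ^ β k)
          = ℓ j' ^ β j' * ∏ k ∈ (Finset.univ.erase j').erase j, ℓ k ^ β k := by
        rw [← Finset.mul_prod_erase _ _ hj'mem]
        congr 1
        apply Finset.prod_congr _ (fun _ _ => rfl)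
        ext x
        simp only [Finset.mem_erase, Finset.mem_univ, and_true]
        tauto
      rw [hprodshift, hprodfull, hprod2, hc]
      simp only [Nat.add_sub_cancel, smul_eq_C_mul, map_mul]
      push_cast
      ring
    · -- last row: no correction term
      rw [add_zero, add_zero]
      have hprodfull : (∏ k, ℓ k ^ β k) = ℓ j ^ β j * ∏ k ∈ Finset.univ.erase j, ℓ k ^ β k :=
        (Finset.mul_prod_erase _ _ (Finset.mem_univ j)).symm
      rw [hprodfull, hc]
      simp only [Nat.add_sub_cancel, smul_eq_C_mul, map_mul]
      push_cast
      ring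
  rw [Finset.sum_congr rfl fun j _ => hterm j, Finset.sum_add_distrib, Finset.sum_smul]



lemma DOp_lin (G : Matrix (Fin n) (Fin n) ℂ) (hG : IsUnit G.det)
    (J : Matrix (Fin n) (Fin n) ℂ) (hJ : J = G * M * G⁻¹) (lam γ : Fin n → ℂ)
    (hdiag : ∀ j : Fin n, J j j = lam j)
    (hsup : ∀ j : Fin n, 0 < j.val →
        J ⟨j.val - 1, Nat.lt_of_le_of_lt (Nat.sub_le _ _) j.isLt⟩ j = γ j)
    (hother : ∀ i j : Fin n, i ≠ j → i.val + 1 ≠ j.val → J i j = 0)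
    (j : Fin n) :
    DOp M (∑ k, C (G j k) * X k) = C (lam j) * (∑ k, C (G j k) * X k) +
      (if h : (j : ℕ) + 1 < n then
        C (γ ⟨(j : ℕ) + 1, h⟩) * (∑ k, C (G ⟨(j : ℕ) + 1, h⟩ k) * X k) else 0) := by
  have hJG : J * G = G * M := by
    rw [hJ, Matrix.mul_assoc (G * M), Matrix.nonsing_inv_mul G hG, Matrix.mul_one]
  -- derivative of the linear form
  have hder : ∀ a : Fin n, pderiv a (∑ k, C (G j k) * X k) = C (G j a) := by
    intro a
    rw [map_sum]
    have h1 : ∀ k : Fin n, pderiv a (C (G j k) * X k)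
        = if k = a then C (G j k) else 0 := by
      intro k
      by_cases hk : k = a
      · subst hk; simp [pderiv_mul, pderiv_X_self]
      · simp [pderiv_mul, pderiv_X_of_ne hk, hk]
    rw [Finset.sum_congr rfl fun k _ => h1 k, Finset.sum_ite_eq' Finset.univ a]
    simp
  -- DOp on the linear form, in terms of the matrix G*M
  have hDl : DOp M (∑ k, C (G j k) * X k) = ∑ b, C ((G * M) j b) * X b := by
    rw [DOp_apply]
    rw [Finset.sum_comm]
    refine Finset.sum_congr rfl fun b _ => ?_
    rw [Finset.sum_congr rfl fun a _ => by rw [hder a]]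
    rw [Matrix.mul_apply, map_sum, Finset.sum_mul]
    refine Finset.sum_congr rfl fun a _ => ?_
    rw [map_mul]
    ring
  -- now the Jordan structure
  have hrow : ∀ b : Fin n, (G * M) j b = lam j * G j b +
      (if h : (j : ℕ) + 1 < n then γ ⟨(j : ℕ) + 1, h⟩ * G ⟨(j : ℕ) + 1, h⟩ b else 0) := by
    intro b
    rw [← hJG, Matrix.mul_apply]
    have hterm : ∀ i : Fin n, J j i * G i b =
        (if i = j then lam j * G j b else 0) +
        (if (i : ℕ) = (j : ℕ) + 1 then γ i * G i b else 0) := by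
      intro i
      by_cases h1 : i = j
      · subst h1
        rw [if_pos rfl, if_neg (by omega), hdiag, add_zero]
      · by_cases h2 : (i : ℕ) = (j : ℕ) + 1
        · have hi0 : 0 < (i : ℕ) := by omega
          have hji : (⟨(i : ℕ) - 1, Nat.lt_of_le_of_lt (Nat.sub_le _ _) i.isLt⟩ : Fin n) = j :=
            Fin.ext (by simp; omega)
          rw [if_neg h1, if_pos h2, zero_add, ← hsup i hi0, hji]
        · rw [hother j i (fun hh => h1 hh.symm) (fun hh => h2 hh.symm), if_neg h1, if_neg h2,
            zero_mul, add_zero]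
    rw [Finset.sum_congr rfl fun i _ => hterm i, Finset.sum_add_distrib,
      Finset.sum_ite_eq' Finset.univ j, if_pos (Finset.mem_univ j)]
    congr 1
    by_cases h : (j : ℕ) + 1 < n
    · rw [dif_pos h]
      have heq : ∀ i : Fin n, ((i : ℕ) = (j : ℕ) + 1) ↔ i = (⟨(j : ℕ) + 1, h⟩ : Fin n) := by
        intro i
        constructor
        · intro hh; exact Fin.ext hh
        · intro hh; rw [hh]
      rw [Finset.sum_congr rfl fun i _ => by rw [if_congr (heq i) rfl rfl],
        Finset.sum_ite_eq' Finset.univ, if_pos (Finset.mem_univ _)]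
    · rw [dif_neg h]
      refine Finset.sum_eq_zero fun i _ => ?_
      rw [if_neg (by have := i.isLt; omega)]
  rw [hDl, Finset.sum_congr rfl fun b _ => by rw [hrow b]]
  by_cases h : (j : ℕ) + 1 < n
  · simp only [dif_pos h, map_add, map_mul, add_mul, Finset.sum_add_distrib, Finset.mul_sum,
      mul_assoc]
  · simp only [dif_neg h, map_add, map_mul, add_mul, Finset.sum_add_distrib, Finset.mul_sum,
      mul_assoc, map_zero, zero_mul, add_zero, Finset.sum_const_zero]

end core

/-- if `G` is invertible and `J = G M G⁻¹` is in Jordan normal form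
with diagonal `λ_1, …, λ_n`, then the polynomial `p_α(z) = (Gz)^α` is a generalized
eigenvector of `D_M` with eigenvalue `λ_α = Σ_j λ_j α_j`:
`(D_M - λ_α)^{(n-1)|α|+1} p_α = 0`. -/
theorem stmt15 (n : ℕ) (hn : 1 ≤ n) (M G : Matrix (Fin n) (Fin n) ℂ)
    (hG : IsUnit G.det) (J : Matrix (Fin n) (Fin n) ℂ)
    (hJ : J = G * M * G⁻¹) (lam γ : Fin n → ℂ)
    (hdiag : ∀ j : Fin n, J j j = lam j)
    (hsup : ∀ j : Fin n, 0 < j.val →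
        J ⟨j.val - 1, Nat.lt_of_le_of_lt (Nat.sub_le _ _) j.isLt⟩ j = γ j)
    (hγ : ∀ j : Fin n, γ j = 0 ∨ γ j = 1)
    (hother : ∀ i j : Fin n, i ≠ j → i.val + 1 ≠ j.val → J i j = 0)
    (hchain : ∀ j : Fin n, ∀ hj : 0 < j.val, γ j = 1 →
        lam ⟨j.val - 1, Nat.lt_of_le_of_lt (Nat.sub_le _ _) j.isLt⟩ = lam j)
    (α : Fin n → ℕ) :
    ((DOp M - (∑ j, lam j * (α j : ℂ)) •
        (1 : Module.End ℂ (MvPolynomial (Fin n) ℂ)))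
      ^ ((n - 1) * (∑ j, α j) + 1))
      (∏ j, (∑ k, C (G j k) * (X k : MvPolynomial (Fin n) ℂ)) ^ α j) = 0 := by
  have hder : ∀ j : Fin n, DOp M (∑ k, C (G j k) * X k) = C (lam j) * (∑ k, C (G j k) * X k) +
      (if h : (j : ℕ) + 1 < n then
        C (γ ⟨(j : ℕ) + 1, h⟩) * (∑ k, C (G ⟨(j : ℕ) + 1, h⟩ k) * X k) else 0) :=
    DOp_lin M G hG J hJ lam γ hdiag hsup hother
  set Λ : ℂ := ∑ j, lam j * (α j : ℂ) with hΛdef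
  set N : Module.End ℂ (MvPolynomial (Fin n) ℂ) := DOp M - Λ • 1 with hNdef
  set S : ℕ := ∑ j, α j with hSdef
  have hDp : ∀ β : Fin n → ℕ,
      DOp M (∏ j, (∑ k, C (G j k) * X k) ^ β j)
        = (∑ j, lam j * (β j : ℂ)) • (∏ j, (∑ k, C (G j k) * X k) ^ β j)
          + ∑ j : Fin n, (if h : (j : ℕ) + 1 < n then
              ((β j : ℂ) * γ ⟨(j : ℕ) + 1, h⟩) •
                (∏ k', (∑ k, C (G k' k) * X k) ^ (shift β j ⟨(j : ℕ) + 1, h⟩ k'))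
            else 0) :=
    fun β => DOp_p M lam γ _ hder β
  have hNp : ∀ β : Fin n → ℕ, (∑ j, lam j * (β j : ℂ)) = Λ →
      N (∏ j, (∑ k, C (G j k) * X k) ^ β j)
        = ∑ j : Fin n, (if h : (j : ℕ) + 1 < n then
            ((β j : ℂ) * γ ⟨(j : ℕ) + 1, h⟩) •
              (∏ k', (∑ k, C (G k' k) * X k) ^ (shift β j ⟨(j : ℕ) + 1, h⟩ k'))
          else 0) := by
    intro β hβ
    have hNap : N (∏ j, (∑ k, C (G j k) * X k) ^ β j)
        = DOp M (∏ j, (∑ k, C (G j k) * X k) ^ β j)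
          - Λ • (∏ j, (∑ k, C (G j k) * X k) ^ β j) := by
      rw [hNdef]
      simp [LinearMap.sub_apply, LinearMap.smul_apply, Module.End.one_apply]
    rw [hNap, hDp β, hβ, add_sub_cancel_left]
  have key : ∀ m : ℕ, ∀ β : Fin n → ℕ, (∑ j, β j) = S →
      (∑ j, lam j * (β j : ℂ)) = Λ →
      (n - 1) * S ≤ (∑ k : Fin n, (k : ℕ) * β k) + m →
      (N ^ (m + 1)) (∏ j, (∑ k, C (G j k) * X k) ^ β j) = 0 := by
    intro m
    induction m with
    | zero =>
      intro β hS hΛ hw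
      rw [pow_one, hNp β hΛ]
      refine Finset.sum_eq_zero fun j _ => ?_
      split_ifs with h
      · have h1 : (∑ k : Fin n, (n - 1 - (k : ℕ)) * β k) + (∑ k : Fin n, (k : ℕ) * β k)
            = (n - 1) * S := by
          rw [← hS, Finset.mul_sum, ← Finset.sum_add_distrib]
          refine Finset.sum_congr rfl fun k _ => ?_
          have hk : (k : ℕ) ≤ n - 1 := by have := k.isLt; omega
          rw [← add_mul, Nat.sub_add_cancel hk]
        have hz : ∑ k : Fin n, (n - 1 - (k : ℕ)) * β k = 0 := by omega
        have hj0 : (n - 1 - (j : ℕ)) * β j = 0 :=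
          (Finset.sum_eq_zero_iff.1 hz) j (Finset.mem_univ j)
        have hβj : β j = 0 := by
          rcases Nat.mul_eq_zero.1 hj0 with hh | hh
          · exact absurd hh (by omega)
          · exact hh
        rw [hβj]
        simp
      · rfl
    | succ m ih =>
      intro β hS hΛ hw
      rw [pow_succ, Module.End.mul_apply, hNp β hΛ, map_sum]
      refine Finset.sum_eq_zero fun j _ => ?_
      split_ifs with h
      · rw [map_smul]
        set j' : Fin n := ⟨(j : ℕ) + 1, h⟩ with hj'
        by_cases hc : (β j : ℂ) * γ j' = 0
        · rw [hc, zero_smul]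
        · have hβj : β j ≠ 0 := fun hz => hc (by rw [hz]; simp)
          have hγ1 : γ j' = 1 := (hγ j').resolve_left fun hz => hc (by rw [hz, mul_zero])
          obtain ⟨c, hcβ⟩ : ∃ c, β j = c + 1 := ⟨β j - 1, by omega⟩
          have hjj : j ≠ j' := fun hh => by
            have := congrArg Fin.val hh
            simp [hj'] at this
          have hlam : lam j = lam j' := by
            have h0 : 0 < (j' : ℕ) := by simp [hj']
            have hcl := hchain j' h0 hγ1
            have hji : (⟨(j' : ℕ) - 1, Nat.lt_of_le_of_lt (Nat.sub_le _ _) j'.isLt⟩ : Fin n)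
                = j := Fin.ext (by simp [hj'])
            rwa [hji] at hcl
          have h1 : (∑ k, shift β j j' k) = S := by
            have hid := sum_shift (fun _ v => v) β j j' hjj
            omega
          have h2 : (∑ k, lam k * (shift β j j' k : ℂ)) = Λ := by
            have hid := sum_shift (fun k v => lam k * (v : ℂ)) β j j' hjj
            rw [hcβ] at hid
            push_cast [Nat.add_sub_cancel] at hid
            rw [← hΛ]
            linear_combination hid - hlam
          have h3 : (n - 1) * S ≤ (∑ k : Fin n, (k : ℕ) * shift β j j' k) + m := by
            have hid := sum_shift (fun k v => (k : ℕ) * v) β j j' hjj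
            rw [hcβ] at hid
            simp only [Nat.add_sub_cancel] at hid
            have e1 : (j : ℕ) * (c + 1) = (j : ℕ) * c + (j : ℕ) := by ring
            have e2 : ((j : ℕ) + 1) * (β j' + 1) = ((j : ℕ) + 1) * β j' + ((j : ℕ) + 1) := by ring
            rw [e1, e2] at hid
            set W' := ∑ k : Fin n, (k : ℕ) * shift β j j' k with hW'
            set W := ∑ k : Fin n, (k : ℕ) * β k with hW
            set T := (n - 1) * S with hT
            set p := (j : ℕ) * c with hp
            set q := ((j : ℕ) + 1) * β j' with hq
            clear_value W' W T p q
            omega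
          rw [ih (shift β j j') h1 h2 h3, smul_zero]
      · rw [map_zero]
  have hwα : (n - 1) * S ≤ (∑ k : Fin n, (k : ℕ) * α k) + (n - 1) * S := Nat.le_add_left _ _
  exact key ((n - 1) * S) α hSdef.symm hΛdef.symm hwα
end

section
/- For a ∈ ℝ let M_a be the 2×2 complex matrix with rows (0, −a) and (a, 1). Then, as t → 0⁺ (real t > 0), the Euclidean norm of the vector e^{−tM_a}(1,0) satisfies ‖e^{−tM_a}(1,0)‖ = 1 − (a²/3) t³ + O(t⁴), i.e., the function t ↦ ‖e^{−tM_a}(1,0)‖ − 1 + (a²/3)t³ is O(t⁴) as t → 0 from the right. -/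
open NormedSpace Matrix

namespace Stmt18

open Asymptotics Filter


noncomputable section

def A (a : ℝ) : Matrix (Fin 2) (Fin 2) ℂ := !![(0 : ℂ), -(a : ℂ); (a : ℂ), 1]

def wx (a t : ℝ) : ℝ := 1 - a ^ 2 * t ^ 2 / 2 + a ^ 2 * t ^ 3 / 6

def wy (a t : ℝ) : ℝ := -(a * t) + a * t ^ 2 / 2 - (a - a ^ 3) * t ^ 3 / 6

def w (a t : ℝ) : EuclideanSpace ℂ (Fin 2) :=
  (EuclideanSpace.equiv (Fin 2) ℂ).symm ![(wx a t : ℂ), (wy a t : ℂ)]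

def v (a t : ℝ) : EuclideanSpace ℂ (Fin 2) :=
  (EuclideanSpace.equiv (Fin 2) ℂ).symm
    ((exp (-(t : ℂ) • A a)).mulVec ![1, 0])

lemma hS (a t : ℝ) :
    ((1 : Matrix (Fin 2) (Fin 2) ℂ) + (-(t : ℂ) • A a) + (2⁻¹ : ℂ) • (-(t : ℂ) • A a) ^ 2
        + (6⁻¹ : ℂ) • (-(t : ℂ) • A a) ^ 3).mulVec ![1, 0]
      = ![(wx a t : ℂ), (wy a t : ℂ)] := by
  funext i
  fin_cases i <;>
    simp [Matrix.mulVec, dotProduct, Fin.sum_univ_two, pow_succ, pow_zero, one_mul, A,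
      Matrix.mul_apply, Matrix.one_apply, wx, wy] <;>
    ring

set_option maxHeartbeats 1000000 in
lemma key (a : ℝ) : (fun t : ℝ => v a t - w a t) =O[nhds 0] fun t : ℝ => t ^ 4 := by
  letI : SeminormedRing (Matrix (Fin 2) (Fin 2) ℂ) := Matrix.linftyOpSemiNormedRing
  letI : NormedRing (Matrix (Fin 2) (Fin 2) ℂ) := Matrix.linftyOpNormedRing
  letI : NormedAlgebra ℂ (Matrix (Fin 2) (Fin 2) ℂ) := Matrix.linftyOpNormedAlgebra
  -- power series remainder for exp
  have hexp := (exp_hasFPowerSeriesAt_zero (𝕂 := ℂ)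
    (𝔸 := Matrix (Fin 2) (Fin 2) ℂ)).isBigO_sub_partialSum_pow 4
  have hg : Tendsto (fun t : ℝ => -(t : ℂ) • A a) (nhds 0) (nhds 0) := by
    have hc : Continuous fun t : ℝ => -(t : ℂ) • A a := by fun_prop
    simpa using hc.tendsto' 0 0 (by simp)
  have h1 := hexp.comp_tendsto hg
  have h2 : (fun t : ℝ => ‖-(t : ℂ) • A a‖ ^ 4) =O[nhds 0] fun t : ℝ => t ^ 4 := by
    refine isBigO_iff.2 ⟨‖A a‖ ^ 4, .of_forall fun t => ?_⟩
    have : ‖-(t : ℂ) • A a‖ = |t| * ‖A a‖ := by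
      rw [norm_smul]; simp
    rw [Real.norm_eq_abs, abs_pow, abs_norm, this, Real.norm_eq_abs]
    rw [mul_pow, ← abs_pow]
    ring_nf
    exact le_of_eq (by ring)
  have hO := h1.trans h2
  -- identify the partial sum
  have hps : ∀ y : Matrix (Fin 2) (Fin 2) ℂ,
      (expSeries ℂ (Matrix (Fin 2) (Fin 2) ℂ)).partialSum 4 y
        = 1 + y + (2⁻¹ : ℂ) • y ^ 2 + (6⁻¹ : ℂ) • y ^ 3 := by
    intro y
    simp [FormalMultilinearSeries.partialSum, Finset.sum_range_succ, expSeries_apply_eq,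
      Nat.factorial]
  -- entrywise bound
  have entry : ∀ (M : Matrix (Fin 2) (Fin 2) ℂ) (i j : Fin 2), ‖M i j‖ ≤ ‖M‖ := by
    intro M i j
    have h1 : ‖M i j‖₊ ≤ ∑ j' : Fin 2, ‖M i j'‖₊ :=
      Finset.single_le_sum (f := fun j' => ‖M i j'‖₊) (fun _ _ => zero_le) (Finset.mem_univ j)
    have h2 : (∑ j' : Fin 2, ‖M i j'‖₊) ≤ Finset.univ.sup fun i => ∑ j' : Fin 2, ‖M i j'‖₊ :=
      Finset.le_sup (f := fun i => ∑ j' : Fin 2, ‖M i j'‖₊) (Finset.mem_univ i)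
    have := h1.trans h2
    rw [Matrix.linfty_opNorm_def]
    exact_mod_cast this
  -- pass to vectors
  refine (IsBigO.of_bound 2 ?_).trans hO
  filter_upwards with t
  set Δ : Matrix (Fin 2) (Fin 2) ℂ :=
    exp (0 + -(t : ℂ) • A a)
      - (expSeries ℂ (Matrix (Fin 2) (Fin 2) ℂ)).partialSum 4 (-(t : ℂ) • A a) with hΔ
  have hvw : ∀ i : Fin 2, (v a t - w a t) i = Δ i 0 := by
    intro i
    have : (v a t - w a t) i
        = (exp (-(t : ℂ) • A a)).mulVec ![1, 0] i - (![(wx a t : ℂ), (wy a t : ℂ)]) i := by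
      simp [v, w]
    rw [this, ← hS a t, hΔ, hps, zero_add]
    simp [Matrix.sub_mulVec, Matrix.mulVec, dotProduct, Fin.sum_univ_two,
      Matrix.sub_apply]
  have hb : ∀ i : Fin 2, ‖(v a t - w a t) i‖ ≤ ‖Δ‖ := fun i => by
    rw [hvw i]; exact entry Δ i 0
  have hnn : (0 : ℝ) ≤ ‖Δ‖ := norm_nonneg _
  have : ‖v a t - w a t‖ ≤ 2 * ‖Δ‖ := by
    rw [EuclideanSpace.norm_eq]
    have hsq : ∑ i : Fin 2, ‖(v a t - w a t) i‖ ^ 2 ≤ (2 * ‖Δ‖) ^ 2 := by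
      rw [Fin.sum_univ_two]
      nlinarith [hb 0, hb 1, norm_nonneg ((v a t - w a t) 0), norm_nonneg ((v a t - w a t) 1)]
    calc Real.sqrt (∑ i : Fin 2, ‖(v a t - w a t) i‖ ^ 2) ≤ Real.sqrt ((2 * ‖Δ‖) ^ 2) :=
          Real.sqrt_le_sqrt hsq
      _ = 2 * ‖Δ‖ := Real.sqrt_sq (by linarith)
  exact this


lemma hw (a t : ℝ) : ‖w a t‖ = Real.sqrt (wx a t ^ 2 + wy a t ^ 2) := by
  simp [w, EuclideanSpace.norm_eq, Fin.sum_univ_two, Complex.norm_real, sq_abs]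

lemma h2 (a : ℝ) :
    (fun t : ℝ => ‖w a t‖ - (1 - a ^ 2 / 3 * t ^ 3)) =O[nhds 0] fun t : ℝ => t ^ 4 := by
  set P : ℝ → ℝ := fun t => (7 * a ^ 2 - a ^ 4) / 12 - a ^ 2 / 6 * t
      + (a ^ 2 - 5 * a ^ 4 + a ^ 6) / 36 * t ^ 2 with hP
  have hq : ∀ t : ℝ, (wx a t ^ 2 + wy a t ^ 2) - (1 - a ^ 2 / 3 * t ^ 3) ^ 2 = t ^ 4 * P t := by
    intro t; simp only [wx, wy, hP]; ring
  have hPO : (fun t : ℝ => t ^ 4 * P t) =O[nhds 0] fun t : ℝ => t ^ 4 := by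
    have hPcont : Continuous P := by fun_prop
    have := (hPcont.tendsto 0).isBigO_one (F := ℝ)
    simpa using (isBigO_refl (fun t : ℝ => t ^ 4) (nhds 0)).mul this
  have hc : ∀ᶠ t in nhds (0 : ℝ), (1 : ℝ) / 2 ≤ 1 - a ^ 2 / 3 * t ^ 3 := by
    have hcont : Continuous fun t : ℝ => 1 - a ^ 2 / 3 * t ^ 3 := by fun_prop
    have := hcont.tendsto' 0 1 (by norm_num)
    exact this.eventually (eventually_ge_nhds (by norm_num))
  refine (IsBigO.of_bound 2 ?_).trans hPO
  filter_upwards [hc] with t hct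
  set c := 1 - a ^ 2 / 3 * t ^ 3
  set N := wx a t ^ 2 + wy a t ^ 2 with hN
  have hN0 : 0 ≤ N := by positivity
  set s := Real.sqrt N with hs
  have hs0 : 0 ≤ s := Real.sqrt_nonneg N
  have hss : s ^ 2 = N := Real.sq_sqrt hN0
  have hsc : (0:ℝ) ≤ s + c := add_nonneg hs0 (le_trans (by norm_num) hct)
  have habs : |s - c| * (s + c) = |s ^ 2 - c ^ 2| := by
    rw [← abs_of_nonneg hsc, ← abs_mul]
    ring_nf
  have h0 : |s - c| * (1 / 2) ≤ |s - c| * (s + c) :=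
    mul_le_mul_of_nonneg_left (by linarith) (abs_nonneg _)
  have h1 : |s - c| ≤ 2 * |s ^ 2 - c ^ 2| := by linarith [habs ▸ h0]
  rw [hw a t]
  have hrw : s ^ 2 - c ^ 2 = t ^ 4 * P t := by rw [hss]; exact hq t
  calc ‖Real.sqrt (wx a t ^ 2 + wy a t ^ 2) - c‖ = |s - c| := rfl
    _ ≤ 2 * |s ^ 2 - c ^ 2| := h1
    _ = 2 * ‖t ^ 4 * P t‖ := by rw [hrw, Real.norm_eq_abs]


end

end Stmt18

open Asymptotics in
/-- for `M_a = [[0, -a], [a, 1]]`, the Euclidean norm of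
`e^{-tM_a}(1,0)` satisfies `‖e^{-tM_a}(1,0)‖ = 1 - (a²/3) t³ + O(t⁴)` as `t → 0⁺`. -/
theorem stmt18 (a : ℝ) :
    (fun t : ℝ =>
        ‖(EuclideanSpace.equiv (Fin 2) ℂ).symm
            ((exp (-(t : ℂ) • !![(0 : ℂ), -(a : ℂ); (a : ℂ), 1])).mulVec
              ![1, 0])‖
          - 1 + (a ^ 2 / 3) * t ^ 3)
      =O[nhdsWithin 0 (Set.Ioi 0)] fun t : ℝ => t ^ 4 := by
  have h1 : (fun t : ℝ => ‖Stmt18.v a t‖ - ‖Stmt18.w a t‖) =O[nhds 0] fun t : ℝ => t ^ 4 := by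
    refine IsBigO.trans ?_ (Stmt18.key a)
    refine isBigO_of_le _ fun t => ?_
    simpa using abs_norm_sub_norm_le (Stmt18.v a t) (Stmt18.w a t)
  have h := (h1.add (Stmt18.h2 a)).mono (nhdsWithin_le_nhds (s := Set.Ioi (0:ℝ)))
  have heq : (fun t : ℝ =>
        ‖(EuclideanSpace.equiv (Fin 2) ℂ).symm
            ((exp (-(t : ℂ) • !![(0 : ℂ), -(a : ℂ); (a : ℂ), 1])).mulVec
              ![1, 0])‖
          - 1 + (a ^ 2 / 3) * t ^ 3)
      = fun t : ℝ =>
        (‖Stmt18.v a t‖ - ‖Stmt18.w a t‖) + (‖Stmt18.w a t‖ - (1 - a ^ 2 / 3 * t ^ 3)) := by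
    funext t
    have hv : Stmt18.v a t = (EuclideanSpace.equiv (Fin 2) ℂ).symm
        ((exp (-(t : ℂ) • !![(0 : ℂ), -(a : ℂ); (a : ℂ), 1])).mulVec ![1, 0]) := rfl
    rw [← hv]; ring
  rw [heq]
  exact h
end

section
/- For a ∈ ℝ and b > 0, let M̃_{a,b} be the 2×2 complex matrix with rows (−b, −a) and (a, 1). Then every eigenvalue λ of M̃_{a,b} satisfies Re λ > 0 if and only if b < min(a², 1). -/
open Matrix

/-- for `a ∈ ℝ`, `b > 0`, and `M̃_{a,b} = [[-b, -a], [a, 1]]`, every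
eigenvalue of `M̃_{a,b}` has positive real part if and only if `b < min(a², 1)`. -/
theorem stmt19 (a b : ℝ) (hb : 0 < b) :
    (∀ lam ∈ spectrum ℂ (!![(-b : ℂ), -(a : ℂ); (a : ℂ), 1]), 0 < lam.re)
      ↔ b < min (a ^ 2) 1 := by
  have key : ∀ lam : ℂ, lam ∈ spectrum ℂ (!![(-b : ℂ), -(a : ℂ); (a : ℂ), 1]) ↔
      lam ^ 2 - (1 - b) * lam + (a ^ 2 - b) = 0 := by
    intro lam
    rw [spectrum.mem_iff, Matrix.isUnit_iff_isUnit_det, isUnit_iff_ne_zero, not_ne_iff]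
    have : (algebraMap ℂ (Matrix (Fin 2) (Fin 2) ℂ) lam - !![(-b : ℂ), -(a : ℂ); (a : ℂ), 1])
        = !![lam + b, a; -a, lam - 1] := by
      ext i j; fin_cases i <;> fin_cases j <;> simp [Matrix.algebraMap_matrix_apply]
    rw [this, Matrix.det_fin_two_of]
    constructor <;> intro h <;> linear_combination h
  simp only [key]
  constructor
  · intro h
    rcases le_or_gt 0 ((1 - b) ^ 2 - 4 * (a ^ 2 - b)) with hD | hD
    · set s := Real.sqrt ((1 - b) ^ 2 - 4 * (a ^ 2 - b)) with hs_def
      have hs : s ^ 2 = (1 - b) ^ 2 - 4 * (a ^ 2 - b) := Real.sq_sqrt hD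
      have hsC : (s : ℂ) ^ 2 = ((1 - b : ℝ) : ℂ) ^ 2 - 4 * (((a : ℂ)) ^ 2 - (b : ℂ)) := by
        push_cast
        exact_mod_cast congrArg (fun x : ℝ => (x : ℂ)) hs
      have h1 := h ((((1 - b) + s) / 2 : ℝ) : ℂ)
        (by push_cast at hsC ⊢; linear_combination hsC / 4)
      have h2 := h ((((1 - b) - s) / 2 : ℝ) : ℂ)
        (by push_cast at hsC ⊢; linear_combination hsC / 4)
      simp only [Complex.ofReal_re] at h1 h2
      refine lt_min ?_ ?_ <;> nlinarith [h1, h2, hs]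
    · set t := Real.sqrt (-((1 - b) ^ 2 - 4 * (a ^ 2 - b))) with ht_def
      have ht : t ^ 2 = -((1 - b) ^ 2 - 4 * (a ^ 2 - b)) := Real.sq_sqrt (by linarith)
      have htC : (t : ℂ) ^ 2 = -(((1 - b) ^ 2 - 4 * (a ^ 2 - b) : ℝ) : ℂ) := by
        exact_mod_cast congrArg (fun x : ℝ => (x : ℂ)) ht
      have h1 := h ((((1 - b) / 2 : ℝ) : ℂ) + Complex.I * (t / 2 : ℝ))
        (by push_cast at htC ⊢; linear_combination -htC / 4 + Complex.I_sq * ((t : ℂ) ^ 2 / 4))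
      simp at h1
      refine lt_min ?_ ?_ <;> nlinarith [h1, ht, sq_nonneg (1 - b)]
  · rintro hlt lam hroot
    have hb1 : b < 1 := lt_of_lt_of_le hlt (min_le_right _ _)
    have hba : b < a ^ 2 := lt_of_lt_of_le hlt (min_le_left _ _)
    rw [Complex.ext_iff] at hroot
    obtain ⟨hre, him⟩ := hroot
    simp [pow_two, Complex.mul_re, Complex.mul_im, Complex.sub_re, Complex.sub_im,
      Complex.add_re, Complex.add_im, Complex.ofReal_re, Complex.ofReal_im] at hre him
    set x := lam.re; set y := lam.im
    by_cases hy : y = 0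
    · rw [hy] at hre
      by_contra hx
      push_neg at hx
      nlinarith [hre, mul_nonneg (sub_nonneg.2 hb1.le) (neg_nonneg.2 hx)]
    · have hx : x = (1 - b) / 2 := by
        have h2 : y * (2 * x - (1 - b)) = 0 := by linarith [him]
        rcases mul_eq_zero.mp h2 with h' | h'
        · exact absurd h' hy
        · linarith
      rw [hx]; linarith
end
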